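/- arXiv:1603.08190 — 11 statements merged into one kernel-verified Lean document; each statement's English description precedes it below -/
import Mathlib

section
/- For a chronology violating class [r], one has I⁻(r) = I⁻([r]) = I⁻(closure([r])). -/
open Set Topology

/-- For a chronology violating class `[r] = I⁺(r) ∩ I⁻(r)`,
`I⁻(r) = I⁻([r]) = I⁻(closure [r])`. -/
theorem Iminus_class_eq
    {M : Type*} [TopologicalSpace M] (ll : M → M → Prop)
    (htrans : ∀ x y z, ll x y → ll y z → ll x z)
    (hopen : IsOpen {p : M × M | ll p.1 p.2})
    (r : M) (hr : ll r r) :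
    let cls : Set M := {y | ll r y} ∩ {y | ll y r}
    {y | ll y r} = {y | ∃ z ∈ cls, ll y z} ∧
    {y | ∃ z ∈ cls, ll y z} = {y | ∃ z ∈ closure cls, ll y z} := by
  intro cls
  constructor
  · ext y
    constructor
    · intro hy
      exact ⟨r, ⟨hr, hr⟩, hy⟩
    · rintro ⟨z, ⟨_, hzr⟩, hyz⟩
      exact htrans y z r hyz hzr
  · ext y
    constructor
    · rintro ⟨z, hz, hyz⟩
      exact ⟨z, subset_closure hz, hyz⟩
    · rintro ⟨z, hz, hyz⟩
      have hU : IsOpen {w | ll y w} := hopen.preimage (Continuous.prodMk_right y)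
      obtain ⟨w, hw1, hw2⟩ := mem_closure_iff.mp hz _ hU hyz
      exact ⟨w, hw2, hw1⟩
end

section
/- For a chronology violating class [r], the following four sets coincide: (i) closure([r]) \ I⁻([r]); (ii) boundary([r]) \ I⁻([r]); (iv) boundary([r]) ∩ ∂I⁻([r]). (Here (iv) uses the topological boundary of the open past set I⁻([r]).) -/
open Set Topology

/-- For a chronology violating class `[r]`, the sets
`closure [r] \ I⁻([r])`, `∂[r] \ I⁻([r])` and `∂[r] ∩ ∂(I⁻([r]))` coincide. -/
theorem Bf_characterizations
    {M : Type*} [TopologicalSpace M] (ll : M → M → Prop)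
    (htrans : ∀ x y z, ll x y → ll y z → ll x z)
    (hopen : IsOpen {p : M × M | ll p.1 p.2})
    (r : M) (hr : ll r r) :
    let cls : Set M := {y | ll r y} ∩ {y | ll y r}
    let Imc : Set M := {y | ∃ z ∈ cls, ll y z}
    closure cls \ Imc = frontier cls \ Imc ∧
    frontier cls \ Imc = frontier cls ∩ frontier Imc := by
  intro cls Imc
  -- cls is open
  have hclsOpen : IsOpen cls := by
    apply IsOpen.inter
    · exact hopen.preimage (Continuous.prodMk_right r)
    · exact hopen.preimage (continuous_id.prodMk continuous_const)
  -- Imc is open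
  have hImcOpen : IsOpen Imc := by
    have : Imc = ⋃ z ∈ cls, {y | ll y z} := by
      ext y; simp [Imc]
    rw [this]
    exact isOpen_biUnion fun z _ =>
      hopen.preimage (continuous_id.prodMk continuous_const)
  -- cls ⊆ Imc
  have hsub : cls ⊆ Imc := fun y hy => ⟨y, hy, htrans y r y hy.2 hy.1⟩
  constructor
  · rw [hclsOpen.frontier_eq]
    ext x
    constructor
    · rintro ⟨hx, hnx⟩
      exact ⟨⟨hx, fun hc => hnx (hsub hc)⟩, hnx⟩
    · rintro ⟨⟨hx, _⟩, hnx⟩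
      exact ⟨hx, hnx⟩
  · ext x
    constructor
    · rintro ⟨hx, hnx⟩
      refine ⟨hx, ?_, ?_⟩
      · exact closure_mono hsub (by rw [hclsOpen.frontier_eq] at hx; exact hx.1)
      · rwa [hImcOpen.interior_eq]
    · rintro ⟨hx, hxI⟩
      refine ⟨hx, ?_⟩
      rw [hImcOpen.frontier_eq] at hxI
      exact hxI.2
end

section
/- The future boundary B_f([r]) := closure([r]) \ I⁻([r]) of a chronology violating class is achronal: no two of its points are related by ≪. -/
open Set Topology

/-- The future boundary `B_f([r]) = closure [r] \ I⁻([r])` of a chronology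
violating class is achronal. -/
theorem Bf_achronal
    {M : Type*} [TopologicalSpace M] (ll : M → M → Prop)
    (htrans : ∀ x y z, ll x y → ll y z → ll x z)
    (hopen : IsOpen {p : M × M | ll p.1 p.2})
    (r : M) (hr : ll r r) :
    let cls : Set M := {y | ll r y} ∩ {y | ll y r}
    let Bf : Set M := closure cls \ {y | ∃ z ∈ cls, ll y z}
    ∀ x ∈ Bf, ∀ y ∈ Bf, ¬ ll x y := by
  intro cls Bf x hx y hy hxy
  have hO : IsOpen {p : M | ll x p} := hopen.preimage (Continuous.prodMk_right x)
  obtain ⟨w, hwO, hwcls⟩ := mem_closure_iff.mp hy.1 _ hO hxy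
  exact hx.2 ⟨w, hwcls, hwO⟩
end

section
/- For a chronology violating class [r], define B_f([r]) = closure([r]) \ I⁻([r]) and B_p([r]) = closure([r]) \ I⁺([r]). Then the boundary of [r] decomposes as ∂[r] = B_p([r]) ∪ B_f([r]). -/
open Set Topology

/-- The boundary of a chronology violating class decomposes as
`∂[r] = B_p([r]) ∪ B_f([r])`. -/
theorem frontier_eq_Bp_union_Bf
    {M : Type*} [TopologicalSpace M] (ll : M → M → Prop)
    (htrans : ∀ x y z, ll x y → ll y z → ll x z)
    (hopen : IsOpen {p : M × M | ll p.1 p.2})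
    (r : M) (hr : ll r r) :
    let cls : Set M := {y | ll r y} ∩ {y | ll y r}
    let Bf : Set M := closure cls \ {y | ∃ z ∈ cls, ll y z}
    let Bp : Set M := closure cls \ {y | ∃ z ∈ cls, ll z y}
    frontier cls = Bp ∪ Bf := by
  intro cls Bf Bp
  have hclsopen : IsOpen cls := by
    apply IsOpen.inter
    · exact hopen.preimage (Continuous.prodMk_right r)
    · exact hopen.preimage (continuous_id.prodMk continuous_const)
  have hfront : frontier cls = closure cls \ cls := by
    rw [frontier, hclsopen.interior_eq]
  rw [hfront]
  ext p
  constructor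
  · rintro ⟨hpc, hpn⟩
    by_cases hI : p ∈ {y | ∃ z ∈ cls, ll z y}
    · right
      refine ⟨hpc, ?_⟩
      rintro ⟨z, hz, hpz⟩
      obtain ⟨w, hw, hwp⟩ := hI
      exact hpn ⟨htrans r w p hw.1 hwp, htrans p z r hpz hz.2⟩
    · left; exact ⟨hpc, hI⟩
  · rintro (⟨hpc, hI⟩ | ⟨hpc, hI⟩) <;> refine ⟨hpc, fun hp => hI ?_⟩
    · exact ⟨r, ⟨hr, hr⟩, hp.1⟩
    · exact ⟨r, ⟨hr, hr⟩, hp.2⟩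
end

section
/- For a chronology violating class [r]: I⁺([r]) ∩ ∂[r] ⊆ B_f([r]) and I⁻([r]) ∩ ∂[r] ⊆ B_p([r]). -/
open Set Topology

/-- For a chronology violating class `[r]`:
`I⁺([r]) ∩ ∂[r] ⊆ B_f([r])` and `I⁻([r]) ∩ ∂[r] ⊆ B_p([r])`. -/
theorem Iplus_frontier_subset_Bf
    {M : Type*} [TopologicalSpace M] (ll : M → M → Prop)
    (htrans : ∀ x y z, ll x y → ll y z → ll x z)
    (hIplusOpen : ∀ x, IsOpen {y | ll x y})
    (hIminusOpen : ∀ x, IsOpen {y | ll y x})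
    (r : M) (hr : ll r r) :
    let cls : Set M := {y | ll r y} ∩ {y | ll y r}
    let Ip : Set M := {y | ∃ z ∈ cls, ll z y}
    let Im : Set M := {y | ∃ z ∈ cls, ll y z}
    let Bf : Set M := closure cls \ Im
    let Bp : Set M := closure cls \ Ip
    Ip ∩ frontier cls ⊆ Bf ∧ Im ∩ frontier cls ⊆ Bp := by
  intro cls Ip Im Bf Bp
  have hopen : IsOpen cls := (hIplusOpen r).inter (hIminusOpen r)
  have hmem : ∀ y, y ∈ Ip → y ∈ Im → y ∈ cls := by
    rintro y ⟨z, ⟨hrz, hzr⟩, hzy⟩ ⟨w, ⟨hrw, hwr⟩, hyw⟩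
    exact ⟨htrans r z y hrz hzy, htrans y w r hyw hwr⟩
  have hfr : ∀ y, y ∈ frontier cls → y ∉ cls := by
    intro y hy hyc
    exact hy.2 (by rwa [hopen.interior_eq])
  constructor
  · rintro y ⟨hyp, hyf⟩
    exact ⟨hyf.1, fun hym => hfr y hyf (hmem y hyp hym)⟩
  · rintro y ⟨hym, hyf⟩
    exact ⟨hyf.1, fun hyp => hfr y hyf (hmem y hyp hym)⟩
end

section
/- For a chronology violating class [r], B_f([r]) = ∂[r] if and only if B_p([r]) = ∅; analogously, B_p([r]) = ∂[r] if and only if B_f([r]) = ∅. -/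
open Set Topology

private lemma Bf_aux_easy {M : Type*} [TopologicalSpace M] (ll : M → M → Prop)
    (C : Set M) (hCopen : IsOpen C)
    (hCfwd : ∀ x ∈ C, ll x x)
    (hCup : ∀ x z w, z ∈ C → w ∈ C → ll z x → ll x w → x ∈ C)
    (h : closure C \ {y | ∃ z ∈ C, ll z y} = ∅) :
    closure C \ {y | ∃ z ∈ C, ll y z} = frontier C := by
  have hfr : frontier C = closure C \ C := by rw [frontier, hCopen.interior_eq]
  apply Set.Subset.antisymm
  · rintro x ⟨hx1, hx2⟩
    rw [hfr]
    refine ⟨hx1, fun hxC => hx2 ⟨x, hxC, hCfwd x hxC⟩⟩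
  · rintro x hx
    rw [hfr] at hx
    obtain ⟨hx1, hx2⟩ := hx
    refine ⟨hx1, fun ⟨z, hzC, hxz⟩ => ?_⟩
    have hplus : x ∈ {y | ∃ z ∈ C, ll z y} := by
      by_contra hnp
      have : x ∈ closure C \ {y | ∃ z ∈ C, ll z y} := ⟨hx1, hnp⟩
      rw [h] at this
      exact this
    obtain ⟨w, hwC, hwx⟩ := hplus
    exact hx2 (hCup x w z hwC hzC hwx hxz)

private lemma Bf_aux_hard {M : Type*} [TopologicalSpace M] (ll : M → M → Prop)
    (hopen : IsOpen {p : M × M | ll p.1 p.2})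
    (hpast_ne : ∀ p : M, ∃ q, ll q p)
    (hpath : ∀ q p : M, ll q p → ∃ γ : ℝ → M, ContinuousOn γ (Set.Icc 0 1) ∧
      γ 0 = q ∧ γ 1 = p ∧ ∀ t ∈ Set.Ioo (0:ℝ) 1, ll q (γ t) ∧ ll (γ t) p)
    (C : Set M) (hCopen : IsOpen C)
    (hCfwd : ∀ x ∈ C, ll x x)
    (h : closure C \ {y | ∃ z ∈ C, ll y z} = frontier C) :
    closure C \ {y | ∃ z ∈ C, ll z y} = ∅ := by
  have hfr : frontier C = closure C \ C := by rw [frontier, hCopen.interior_eq]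
  rw [Set.eq_empty_iff_forall_notMem]
  rintro p ⟨hpcl, hpI⟩
  obtain ⟨q, hqp⟩ := hpast_ne p
  have hqopen : IsOpen {y | ll q y} :=
    hopen.preimage (Continuous.prodMk_right q)
  obtain ⟨x, hxq, hxC⟩ := (mem_closure_iff.mp hpcl _ hqopen hqp)
  have hqncl : q ∉ closure C := by
    intro hq
    by_cases hqc : q ∈ C
    · exact hpI ⟨q, hqc, hqp⟩
    · have hqf : q ∈ closure C \ {y | ∃ z ∈ C, ll y z} := by
        rw [h, hfr]; exact ⟨hq, hqc⟩
      exact hqf.2 ⟨x, hxC, hxq⟩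
  obtain ⟨γ, hγc, hγ0, hγ1, hγm⟩ := hpath q x hxq
  set S : Set ℝ := Icc 0 1 ∩ γ ⁻¹' (closure C) with hS
  have hScl : IsClosed S :=
    hγc.preimage_isClosed_of_isClosed isClosed_Icc isClosed_closure
  have hSne : S.Nonempty :=
    ⟨1, ⟨by norm_num, le_refl 1⟩, by
      simp only [mem_preimage, hγ1]; exact subset_closure hxC⟩
  have hbdd : BddBelow S := ⟨0, fun t ht => ht.1.1⟩
  set t0 := sInf S with ht0
  have ht0S : t0 ∈ S := hScl.csInf_mem hSne hbdd
  have ht0Icc : t0 ∈ Icc (0:ℝ) 1 := ht0S.1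
  have ht0pos : 0 < t0 := by
    rcases lt_or_eq_of_le ht0Icc.1 with h' | h'
    · exact h'
    · exfalso
      apply hqncl
      have h2 := ht0S.2
      rw [mem_preimage, ← h', hγ0] at h2
      exact h2
  have key : ∀ s ∈ Icc (0:ℝ) 1, 0 < s → γ s ∈ C → ∃ t ∈ S, t < s := by
    intro s hs hspos hsC
    have hcw : ContinuousWithinAt γ (Icc 0 1) s := hγc s hs
    have hev : γ ⁻¹' C ∈ 𝓝[Icc (0:ℝ) 1] s := hcw (hCopen.mem_nhds hsC)
    have hsub : Ico (0:ℝ) s ⊆ Icc 0 1 :=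
      fun t ht => ⟨ht.1, le_trans (le_of_lt ht.2) hs.2⟩
    have hne : (𝓝[Ico (0:ℝ) s] s).NeBot := by
      rw [← mem_closure_iff_nhdsWithin_neBot, closure_Ico hspos.ne]
      exact ⟨le_of_lt hspos, le_refl s⟩
    have hev2 : γ ⁻¹' C ∈ 𝓝[Ico (0:ℝ) s] s := nhdsWithin_mono s hsub hev
    obtain ⟨t, htC, htIco⟩ :=
      hne.nonempty_of_mem (Filter.inter_mem hev2 self_mem_nhdsWithin)
    exact ⟨t, ⟨hsub htIco, subset_closure htC⟩, htIco.2⟩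
  obtain ⟨t1, ht1S, ht1lt⟩ := key 1 ⟨by norm_num, le_refl 1⟩ (by norm_num) (hγ1 ▸ hxC)
  have ht0lt1 : t0 < 1 := lt_of_le_of_lt (csInf_le hbdd ht1S) ht1lt
  have hnotC : γ t0 ∉ C := by
    intro hmem
    obtain ⟨t, htS, htlt⟩ := key t0 ht0Icc ht0pos hmem
    exact absurd (csInf_le hbdd htS) (not_le.mpr htlt)
  have hmemfr : γ t0 ∈ closure C \ {y | ∃ z ∈ C, ll y z} := by
    rw [h, hfr]; exact ⟨ht0S.2, hnotC⟩
  exact hmemfr.2 ⟨x, hxC, (hγm t0 ⟨ht0pos, ht0lt1⟩).2⟩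

/-- `B_f([r]) = ∂[r]` iff `B_p([r]) = ∅`, and `B_p([r]) = ∂[r]` iff
`B_f([r]) = ∅`. -/
theorem Bf_eq_frontier_iff_Bp_empty
    {M : Type*} [TopologicalSpace M] (ll : M → M → Prop)
    (htrans : ∀ x y z, ll x y → ll y z → ll x z)
    (hopen : IsOpen {p : M × M | ll p.1 p.2})
    (hpast_ne : ∀ p : M, ∃ q, ll q p)
    (hfut_ne : ∀ p : M, ∃ q, ll p q)
    (hpath : ∀ q p : M, ll q p → ∃ γ : ℝ → M, ContinuousOn γ (Set.Icc 0 1) ∧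
      γ 0 = q ∧ γ 1 = p ∧ ∀ t ∈ Set.Ioo (0:ℝ) 1, ll q (γ t) ∧ ll (γ t) p)
    (r : M) (hr : ll r r) :
    let cls : Set M := {y | ll r y} ∩ {y | ll y r}
    let Bf : Set M := closure cls \ {y | ∃ z ∈ cls, ll y z}
    let Bp : Set M := closure cls \ {y | ∃ z ∈ cls, ll z y}
    (Bf = frontier cls ↔ Bp = ∅) ∧ (Bp = frontier cls ↔ Bf = ∅) := by
  intro cls Bf Bp
  have hCopen : IsOpen cls := by
    apply IsOpen.inter
    · exact hopen.preimage (Continuous.prodMk_right r)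
    · exact hopen.preimage (continuous_id.prodMk continuous_const)
  have hCfwd : ∀ x ∈ cls, ll x x := fun x hx => htrans x r x hx.2 hx.1
  have hCup : ∀ x z w, z ∈ cls → w ∈ cls → ll z x → ll x w → x ∈ cls :=
    fun x z w hz hw hzx hxw => ⟨htrans r z x hz.1 hzx, htrans x w r hxw hw.2⟩
  -- flipped relation
  set ll' : M → M → Prop := fun a b => ll b a with hll'
  have hopen' : IsOpen {p : M × M | ll' p.1 p.2} := by
    have heq : {p : M × M | ll' p.1 p.2} = Prod.swap ⁻¹' {p : M × M | ll p.1 p.2} := rfl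
    rw [heq]; exact hopen.preimage continuous_swap
  have hpath' : ∀ q p : M, ll' q p → ∃ γ : ℝ → M, ContinuousOn γ (Set.Icc 0 1) ∧
      γ 0 = q ∧ γ 1 = p ∧ ∀ t ∈ Set.Ioo (0:ℝ) 1, ll' q (γ t) ∧ ll' (γ t) p := by
    intro q p hqp
    obtain ⟨γ, hγc, hγ0, hγ1, hγm⟩ := hpath p q hqp
    refine ⟨fun t => γ (1 - t), ?_, by simp [hγ1], by simp [hγ0], ?_⟩
    · apply hγc.comp ((continuous_const.sub continuous_id).continuousOn)
      intro t ht
      simp only [id_eq, Set.mem_Icc, Pi.sub_apply]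
      exact ⟨by linarith [ht.2], by linarith [ht.1]⟩
    · intro t ht
      have hm := hγm (1 - t) ⟨by linarith [ht.2], by linarith [ht.1]⟩
      exact ⟨hm.2, hm.1⟩
  have hCfwd' : ∀ x ∈ cls, ll' x x := hCfwd
  constructor
  · constructor
    · exact Bf_aux_hard ll hopen hpast_ne hpath cls hCopen hCfwd
    · exact Bf_aux_easy ll cls hCopen hCfwd hCup
  · constructor
    · exact Bf_aux_hard ll' hopen' hfut_ne hpath' cls hCopen hCfwd'
    · exact Bf_aux_easy ll' cls hCopen hCfwd'
        (fun x z w hz hw hzx hxw => hCup x w z hw hz hxw hzx)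
end

section
/- The identities B_f([r]) ∩ I⁺([r]) = B_f([r]) \ B_p([r]) = ∂I⁻([r]) ∩ I⁺([r]) hold. -/
open Set Topology

/-- The identities
`B_f([r]) ∩ I⁺([r]) = B_f([r]) \ B_p([r]) = ∂I⁻([r]) ∩ I⁺([r])` hold. -/
theorem Bf_inter_Iplus_identities
    {M : Type*} [TopologicalSpace M] (ll : M → M → Prop)
    (htrans : ∀ x y z, ll x y → ll y z → ll x z)
    (hopen : IsOpen {p : M × M | ll p.1 p.2})
    (hdense : ∀ p : M, ∀ U ∈ nhds p, ∃ q ∈ U, ll q p)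
    (r : M) (hr : ll r r) :
    let cls : Set M := {y | ll r y} ∩ {y | ll y r}
    let Ip : Set M := {y | ∃ z ∈ cls, ll z y}
    let Im : Set M := {y | ∃ z ∈ cls, ll y z}
    let Bf : Set M := closure cls \ Im
    let Bp : Set M := closure cls \ Ip
    Bf ∩ Ip = Bf \ Bp ∧ Bf \ Bp = frontier Im ∩ Ip := by
  intro cls Ip Im Bf Bp
  -- Im is open
  have hImOpen : IsOpen Im := by
    have : Im = ⋃ z ∈ cls, {y | ll y z} := by
      ext y; simp [Im, Set.mem_iUnion]
    rw [this]
    refine isOpen_biUnion fun z _ => ?_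
    have : {y | ll y z} = (fun y => (y, z)) ⁻¹' {p : M × M | ll p.1 p.2} := rfl
    rw [this]
    exact hopen.preimage (Continuous.prodMk continuous_id continuous_const)
  have hrcls : r ∈ cls := ⟨hr, hr⟩
  -- cls ⊆ Im
  have hclsIm : cls ⊆ Im := fun z hz => ⟨r, hrcls, hz.2⟩
  have h1 : Bf ∩ Ip = Bf \ Bp := by
    ext x
    constructor
    · rintro ⟨⟨hxc, hxm⟩, hxp⟩
      exact ⟨⟨hxc, hxm⟩, fun h => h.2 hxp⟩
    · rintro ⟨⟨hxc, hxm⟩, hxbp⟩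
      refine ⟨⟨hxc, hxm⟩, ?_⟩
      by_contra hxp
      exact hxbp ⟨hxc, hxp⟩
  refine ⟨h1, ?_⟩
  rw [← h1]
  ext x
  constructor
  · rintro ⟨⟨hxc, hxm⟩, hxp⟩
    refine ⟨⟨closure_mono hclsIm hxc, fun h => hxm ?_⟩, hxp⟩
    rwa [hImOpen.interior_eq] at h
  · rintro ⟨⟨hxcIm, hxint⟩, hxp⟩
    have hxm : x ∉ Im := fun h => hxint (by rwa [hImOpen.interior_eq])
    refine ⟨⟨?_, hxm⟩, hxp⟩
    -- x ∈ closure cls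
    obtain ⟨z, hz, hzx⟩ := hxp
    rw [mem_closure_iff]
    intro U hU hxU
    have hVopen : IsOpen {y | ll z y} := by
      have : {y | ll z y} = (fun y => (z, y)) ⁻¹' {p : M × M | ll p.1 p.2} := rfl
      rw [this]
      exact hopen.preimage (Continuous.prodMk continuous_const continuous_id)
    have hmeet := (mem_closure_iff.mp hxcIm) (U ∩ {y | ll z y})
      (hU.inter hVopen) ⟨hxU, hzx⟩
    obtain ⟨q, ⟨hqU, hzq⟩, w, hw, hqw⟩ := hmeet
    exact ⟨q, hqU, htrans r z q hz.1 hzq, htrans q w r hqw hw.2⟩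
end

section
/- If p ∈ B_f([r]) \ B_p([r]) and γ : [-1,0] → M is a timelike curve with γ(0) = p (i.e. γ(s) ≪ γ(t) for s < t and γ is continuous), then there exists ε ∈ (0,1) such that γ((-ε,0)) ⊆ [r]. -/
open Set Topology

/-- If `p ∈ B_f([r]) \ B_p([r])` and `γ : [-1,0] → M` is a timelike curve with
`γ 0 = p`, then there is `ε ∈ (0,1)` with `γ((-ε,0)) ⊆ [r]`. -/
theorem timelike_curve_enters_class
    {M : Type*} [TopologicalSpace M] (ll : M → M → Prop)
    (htrans : ∀ x y z, ll x y → ll y z → ll x z)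
    (hopen : IsOpen {p : M × M | ll p.1 p.2})
    (r : M) (hr : ll r r)
    (cls Bf Bp : Set M)
    (hcls : cls = {y | ll r y} ∩ {y | ll y r})
    (hBf : Bf = closure cls \ {y | ∃ z ∈ cls, ll y z})
    (hBp : Bp = closure cls \ {y | ∃ z ∈ cls, ll z y})
    (p : M) (hp : p ∈ Bf \ Bp)
    (γ : ℝ → M) (hcont : ContinuousOn γ (Set.Icc (-1) 0))
    (hend : γ 0 = p)
    (htime : ∀ s ∈ Set.Icc (-1:ℝ) 0, ∀ t ∈ Set.Icc (-1:ℝ) 0, s < t → ll (γ s) (γ t)) :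
    ∃ ε ∈ Set.Ioo (0:ℝ) 1, ∀ t ∈ Set.Ioo (-ε) (0:ℝ), γ t ∈ cls := by
  obtain ⟨hpBf, hpBp⟩ := hp
  rw [hBf] at hpBf
  rw [hBp] at hpBp
  obtain ⟨hpcl, _⟩ := hpBf
  have hz : ∃ z ∈ cls, ll z p := by
    by_contra h
    exact hpBp ⟨hpcl, h⟩
  obtain ⟨z, hzcls, hzp⟩ := hz
  have hsec : ∀ a : M, IsOpen {y | ll a y} := fun a => by
    have : Continuous fun y : M => (a, y) := by continuity
    exact hopen.preimage this
  have h0 : (0:ℝ) ∈ Icc (-1:ℝ) 0 := by norm_num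
  have hc : ContinuousWithinAt γ (Icc (-1) 0) 0 := hcont 0 h0
  have hmem : γ 0 ∈ {y | ll z y} := by rw [hend]; exact hzp
  have hnhds : γ ⁻¹' {y | ll z y} ∈ 𝓝[Icc (-1:ℝ) 0] 0 :=
    hc ((hsec z).mem_nhds hmem)
  rw [Metric.mem_nhdsWithin_iff] at hnhds
  obtain ⟨δ, hδpos, hδ⟩ := hnhds
  refine ⟨min δ 1 / 2, ⟨by positivity, by
    have : min δ 1 ≤ 1 := min_le_right _ _
    linarith⟩, ?_⟩
  intro t ht
  have hεδ : min δ 1 / 2 < δ := by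
    have h1 : min δ 1 ≤ δ := min_le_left _ _
    linarith
  have hε1 : min δ 1 / 2 < 1 := by
    have : min δ 1 ≤ 1 := min_le_right _ _
    linarith
  have htIcc : t ∈ Icc (-1:ℝ) 0 := ⟨by linarith [ht.1], le_of_lt ht.2⟩
  have htball : t ∈ Metric.ball (0:ℝ) δ := by
    simp only [Metric.mem_ball, Real.dist_eq, sub_zero]
    rw [abs_of_neg ht.2]
    linarith [ht.1]
  have hzt : ll z (γ t) := hδ ⟨htball, htIcc⟩
  have hrt : ll r (γ t) := htrans r z (γ t) ((hcls ▸ hzcls).1) hzt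
  have htp : ll (γ t) p := by
    have := htime t htIcc 0 h0 ht.2
    rwa [hend] at this
  -- γ t ≪ p and p ∈ closure cls, so {y | ll (γ t) y} meets cls
  have hne : ({y | ll (γ t) y} ∩ cls).Nonempty :=
    mem_closure_iff.mp hpcl _ (hsec (γ t)) htp
  obtain ⟨w, hw1, hw2⟩ := hne
  have htr : ll (γ t) r := htrans (γ t) w r hw1 ((hcls ▸ hw2).2)
  rw [hcls]
  exact ⟨hrt, htr⟩
end

section
/- For a chronology violating class [r]: the class [r] is causally convex (if x ≤ y ≤ z with x, z ∈ [r] then y ∈ [r]) and the closure of [r] is chronologically convex (if x ≪ y ≪ z with x, z ∈ closure([r]) then y ∈ [r], in particular y ∈ closure([r])). -/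
open Set Topology

/-- A chronology violating class `[r]` is causally convex and its closure is
chronologically convex. -/
theorem class_causally_convex
    {M : Type*} [TopologicalSpace M] (ll : M → M → Prop) (le : M → M → Prop)
    (htrans : ∀ x y z, ll x y → ll y z → ll x z)
    (hopen : IsOpen {p : M × M | ll p.1 p.2})
    (hrefl : ∀ x, le x x) (hletrans : ∀ x y z, le x y → le y z → le x z)
    (hpush₁ : ∀ x y z, ll x y → le y z → ll x z)
    (hpush₂ : ∀ x y z, le x y → ll y z → ll x z)
    (r : M) (hr : ll r r) :
    let cls : Set M := {y | ll r y} ∩ {y | ll y r}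
    (∀ x y z, x ∈ cls → z ∈ cls → le x y → le y z → y ∈ cls) ∧
    (∀ x y z, x ∈ closure cls → z ∈ closure cls → ll x y → ll y z → y ∈ cls) := by
  intro cls
  constructor
  · rintro x y z ⟨hrx, hxr⟩ ⟨hrz, hzr⟩ hxy hyz
    exact ⟨hpush₁ r x y hrx hxy, hpush₂ y z r hyz hzr⟩
  · intro x y z hx hz hxy hyz
    have h1 : IsOpen {w : M | ll w y} := by
      have : Continuous fun w : M => (w, y) := by continuity
      exact hopen.preimage this
    have h2 : IsOpen {w : M | ll y w} := by
      have : Continuous fun w : M => (y, w) := by continuity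
      exact hopen.preimage this
    obtain ⟨w, hw1, hw2⟩ := mem_closure_iff.mp hx _ h1 hxy
    obtain ⟨v, hv1, hv2⟩ := mem_closure_iff.mp hz _ h2 hyz
    exact ⟨htrans r w y hw2.1 hw1, htrans y v r hv1 hv2.2⟩
end

section
/- Let F be a future set (I⁺(F) ⊆ F). Then the closure of F is a future set, M \ F is a past set, and the boundary ∂F is achronal. -/
open Set Topology

/-- If `F` is a future set (`I⁺(F) ⊆ F`) then `closure F` is a future set,
`M \ F` is a past set, and the boundary `∂F` is achronal. -/
theorem future_set_properties
    {M : Type*} [TopologicalSpace M] (ll : M → M → Prop)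
    (htrans : ∀ x y z, ll x y → ll y z → ll x z)
    (hopen : IsOpen {p : M × M | ll p.1 p.2})
    (F : Set M) (hF : {y | ∃ s ∈ F, ll s y} ⊆ F) :
    ({y | ∃ s ∈ closure F, ll s y} ⊆ closure F) ∧
    ({y | ∃ s ∈ Fᶜ, ll y s} ⊆ Fᶜ) ∧
    (∀ x ∈ frontier F, ∀ y ∈ frontier F, ¬ ll x y) := by
  have hopen1 : ∀ s : M, IsOpen {z | ll s z} :=
    fun s => hopen.preimage (Continuous.prodMk_right s)
  have hopen2 : ∀ y : M, IsOpen {x | ll x y} :=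
    fun y => hopen.preimage (continuous_id.prodMk continuous_const)
  have key : ∀ s y, s ∈ closure F → ll s y → y ∈ F := by
    intro s y hs hsy
    rcases mem_closure_iff.mp hs {x | ll x y} (hopen2 y) hsy with ⟨s', hs'y, hs'F⟩
    exact hF ⟨s', hs'F, hs'y⟩
  refine ⟨?_, ?_, ?_⟩
  · rintro y ⟨s, hs, hsy⟩
    exact subset_closure (key s y hs hsy)
  · rintro y ⟨s, hs, hys⟩ hyF
    exact hs (hF ⟨y, hyF, hys⟩)
  · rintro x hx y hy hxy
    rw [frontier_eq_closure_inter_closure] at hx hy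
    rcases mem_closure_iff.mp hx.1 {x' | ll x' y} (hopen2 y) hxy with ⟨s, hsy, hsF⟩
    have hyint : y ∈ interior F :=
      mem_interior.mpr ⟨{z | ll s z}, fun z hz => hF ⟨s, hsF, hz⟩, hopen1 s, hsy⟩
    have : y ∉ closure Fᶜ := by
      rw [closure_compl]
      exact fun h => h hyint
    exact this hy.2
end

section
/- If x ≪ y ≪ z with x, z in the closure of the chronology violating class [r], then y ∈ [r]; consequently, the boundary ∂[r] contains no point y with x ≪ y ≪ z for x, z ∈ closure([r]). -/
open Set Topology

/-- If `x ≪ y ≪ z` with `x, z` in the closure of the chronology violating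
class `[r]`, then `y ∈ [r]`; consequently no boundary point of `[r]` lies
chronologically between two points of `closure [r]`. -/
theorem between_closure_mem_class
    {M : Type*} [TopologicalSpace M] (ll : M → M → Prop)
    (htrans : ∀ x y z, ll x y → ll y z → ll x z)
    (hopen : IsOpen {p : M × M | ll p.1 p.2})
    (r : M) (hr : ll r r) :
    let cls : Set M := {y | ll r y} ∩ {y | ll y r}
    (∀ x y z, x ∈ closure cls → z ∈ closure cls → ll x y → ll y z → y ∈ cls) ∧
    (∀ y ∈ frontier cls, ¬ ∃ x z, x ∈ closure cls ∧ z ∈ closure cls ∧ ll x y ∧ ll y z) := by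
  intro cls
  have hcls_open : IsOpen cls := by
    have h1 : IsOpen {y : M | ll r y} :=
      hopen.preimage (Continuous.prodMk_right r)
    have h2 : IsOpen {y : M | ll y r} :=
      hopen.preimage (Continuous.prodMk_left r)
    exact h1.inter h2
  have main : ∀ x y z, x ∈ closure cls → z ∈ closure cls → ll x y → ll y z → y ∈ cls := by
    intro x y z hx hz hxy hyz
    -- {a | ll a y} is open and contains x
    have hU : IsOpen {a : M | ll a y} := hopen.preimage (Continuous.prodMk_left y)
    obtain ⟨x', hx'U, hx'cls⟩ :=
      mem_closure_iff.mp hx _ hU hxy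
    have hV : IsOpen {a : M | ll y a} := hopen.preimage (Continuous.prodMk_right y)
    obtain ⟨z', hz'V, hz'cls⟩ :=
      mem_closure_iff.mp hz _ hV hyz
    exact ⟨htrans r x' y hx'cls.1 hx'U, htrans y z' r hz'V hz'cls.2⟩
  refine ⟨main, ?_⟩
  rintro y hy ⟨x, z, hx, hz, hxy, hyz⟩
  have : y ∈ cls := main x y z hx hz hxy hyz
  exact hy.2 (hcls_open.mem_nhds this |> mem_interior_iff_mem_nhds.mpr)
end
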